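/- Discrete Lelieuvre decomposition for a generic 2D lattice: let r, n : ℤ² → ℝ³ satisfy ⟨n(m,n), Δ_m r(m,n)⟩ = 0 and ⟨n(m,n), Δ_n r(m,n)⟩ = 0 for all (m,n) (n is a co-normal field to the lower triangles), and assume V(m,n) := det(n(m,n), n(m+1,n), n(m,n+1)) ≠ 0 for all (m,n). Then ⟨n(m,n), Δ_n r(m+1,n)⟩ = ⟨n(m,n), Δ_m r(m,n+1)⟩ for all (m,n), and the functions a(m,n) = −⟨n(m,n+1), Δ_n r(m+1,n)⟩ / V(m,n), b(m,n) = −⟨n(m+1,n), Δ_m r(m,n+1)⟩ / V(m,n), s(m,n) = ⟨n(m,n), Δ_n r(m+1,n)⟩ / V(m,n) satisfy, for all (m,n), the discrete Lelieuvre relations: Δ_n r(m,n) = n(m,n) × ( a(m−1,n)·n(m−1,n) + s(m−1,n)·n(m−1,n+1) ) and Δ_m r(m,n) = −n(m,n) × ( b(m,n−1)·n(m,n−1) + s(m,n−1)·n(m+1,n−1) ). -/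

import Mathlib

open Matrix

/-- Determinant of the 3×3 matrix with rows `u`, `v`, `w`. -/
noncomputable def det3 (u v w : Fin 3 → ℝ) : ℝ :=
  (Matrix.of ![u, v, w]).det

lemma key3 (u v w x : Fin 3 → ℝ) :
    det3 u v w • x = (u ⬝ᵥ x) • (v ⨯₃ w) + (v ⬝ᵥ x) • (w ⨯₃ u) + (w ⬝ᵥ x) • (u ⨯₃ v) := by
  funext i
  fin_cases i <;>
    simp [det3, crossProduct, dotProduct, Fin.sum_univ_three, Matrix.det_fin_three] <;> ring

lemma auxA (u v w x : Fin 3 → ℝ) (hV : det3 u v w ≠ 0) (hvx : v ⬝ᵥ x = 0) :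
    x = v ⨯₃ ((-(w ⬝ᵥ x) / det3 u v w) • u + ((u ⬝ᵥ x) / det3 u v w) • w) := by
  apply smul_right_injective (Fin 3 → ℝ) hV
  dsimp only
  have key := key3 u v w x
  rw [hvx, zero_smul, add_zero, ← cross_anticomm v u] at key
  rw [key, map_add, LinearMap.map_smul, LinearMap.map_smul]
  match_scalars <;> field_simp

lemma auxB (u v w x : Fin 3 → ℝ) (hV : det3 u v w ≠ 0) (hwx : w ⬝ᵥ x = 0) :
    x = -(w ⨯₃ ((-(v ⬝ᵥ x) / det3 u v w) • u + ((u ⬝ᵥ x) / det3 u v w) • v)) := by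
  apply smul_right_injective (Fin 3 → ℝ) hV
  dsimp only
  have key := key3 u v w x
  rw [hwx, zero_smul, add_zero, ← cross_anticomm w v] at key
  rw [key, map_add, LinearMap.map_smul, LinearMap.map_smul]
  match_scalars <;> field_simp

/-- Discrete Lelieuvre decomposition for a generic 2D lattice: if `n` is a
co-normal field to the lower triangles of the lattice `r` and
`V(m,k) = det(n(m,k), n(m+1,k), n(m,k+1)) ≠ 0`, then
`⟨n(m,k), Δ_n r(m+1,k)⟩ = ⟨n(m,k), Δ_m r(m,k+1)⟩`, and the coefficients `a, b, s`
defined from `r` and `n` satisfy the discrete Lelieuvre relations. -/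
theorem discrete_lelieuvre_decomposition
    (r n : ℤ → ℤ → (Fin 3 → ℝ))
    (horth : ∀ m k : ℤ,
      n m k ⬝ᵥ (r (m + 1) k - r m k) = 0 ∧ n m k ⬝ᵥ (r m (k + 1) - r m k) = 0)
    (hV : ∀ m k : ℤ, det3 (n m k) (n (m + 1) k) (n m (k + 1)) ≠ 0)
    (a b s : ℤ → ℤ → ℝ)
    (ha : ∀ m k : ℤ, a m k
      = -(n m (k + 1) ⬝ᵥ (r (m + 1) (k + 1) - r (m + 1) k))
          / det3 (n m k) (n (m + 1) k) (n m (k + 1)))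
    (hb : ∀ m k : ℤ, b m k
      = -(n (m + 1) k ⬝ᵥ (r (m + 1) (k + 1) - r m (k + 1)))
          / det3 (n m k) (n (m + 1) k) (n m (k + 1)))
    (hs : ∀ m k : ℤ, s m k
      = (n m k ⬝ᵥ (r (m + 1) (k + 1) - r (m + 1) k))
          / det3 (n m k) (n (m + 1) k) (n m (k + 1))) :
    (∀ m k : ℤ,
      n m k ⬝ᵥ (r (m + 1) (k + 1) - r (m + 1) k)
        = n m k ⬝ᵥ (r (m + 1) (k + 1) - r m (k + 1))) ∧
    (∀ m k : ℤ,
      r m (k + 1) - r m k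
        = n m k ⨯₃ (a (m - 1) k • n (m - 1) k + s (m - 1) k • n (m - 1) (k + 1)) ∧
      r (m + 1) k - r m k
        = -(n m k ⨯₃ (b m (k - 1) • n m (k - 1) + s m (k - 1) • n (m + 1) (k - 1)))) := by
  have h1 : ∀ m k : ℤ,
      n m k ⬝ᵥ (r (m + 1) (k + 1) - r (m + 1) k)
        = n m k ⬝ᵥ (r (m + 1) (k + 1) - r m (k + 1)) := by
    intro m k
    have e1 := (horth m k).1
    have e2 := (horth m k).2
    simp only [dotProduct_sub] at e1 e2 ⊢
    linarith
  refine ⟨h1, fun m k => ⟨?_, ?_⟩⟩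
  · have hm : m - 1 + 1 = m := by ring
    have hV' : det3 (n (m-1) k) (n m k) (n (m-1) (k+1)) ≠ 0 := by
      have := hV (m-1) k; rwa [hm] at this
    have H := auxA (n (m-1) k) (n m k) (n (m-1) (k+1)) (r m (k+1) - r m k) hV' (horth m k).2
    rw [ha (m-1) k, hs (m-1) k, hm]
    exact H
  · have hk : k - 1 + 1 = k := by ring
    have hV' : det3 (n m (k-1)) (n (m+1) (k-1)) (n m k) ≠ 0 := by
      have := hV m (k-1); rwa [hk] at this
    have hs' : s m (k-1)
        = (n m (k-1) ⬝ᵥ (r (m+1) k - r m k))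
            / det3 (n m (k-1)) (n (m+1) (k-1)) (n m k) := by
      have h2 := h1 m (k-1)
      rw [hs m (k-1)]
      rw [hk] at h2 ⊢
      rw [h2]
    have H := auxB (n m (k-1)) (n (m+1) (k-1)) (n m k) (r (m+1) k - r m k) hV' (horth m k).1
    rw [hb m (k-1), hs', hk]
    exact H
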